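/- There exists an absolutely continuous probability measure on ℝ that is not a countable mixture of uniform distributions on dyadic intervals. Specifically, there is an open dense subset A of (0,1) with 0 < Leb(A) < 1, and the uniform distribution on [0,1]∖A is not in Mix{unif(k2^m,(k+1)2^m) : k,m∈ℤ}, since its support contains no interval of positive length. -/

import Mathlib

open MeasureTheory Set
open scoped ENNReal

/-- The uniform distribution on the interval (a,b). -/
noncomputable def unif (a b : ℝ) : Measure ℝ :=
  (ENNReal.ofReal (b - a))⁻¹ • volume.restrict (Set.Ioo a b)

/-- The uniform distribution on the dyadic interval (k·2^m, (k+1)·2^m). -/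
noncomputable def dyadicUnif (k m : ℤ) : Measure ℝ :=
  unif ((k : ℝ) * 2 ^ m) (((k : ℝ) + 1) * 2 ^ m)

/-- μ is a countable mixture of uniform distributions on dyadic intervals. -/
def InMixDyadic (μ : Measure ℝ) : Prop :=
  ∃ p : ℤ × ℤ → ℝ≥0∞, (∑' km, p km) = 1 ∧
    μ = Measure.sum (fun km : ℤ × ℤ => p km • dyadicUnif km.1 km.2)

lemma dyadicUnif_apply (k m : ℤ) (S : Set ℝ) (hS : MeasurableSet S) :
    dyadicUnif k m S =
      (ENNReal.ofReal (2 ^ m))⁻¹ *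
        volume (S ∩ Set.Ioo ((k : ℝ) * 2 ^ m) (((k : ℝ) + 1) * 2 ^ m)) := by
  have hlen : ((k:ℝ)+1) * 2 ^ m - (k:ℝ) * 2 ^ m = 2 ^ m := by ring
  simp [dyadicUnif, unif, Measure.restrict_apply hS, hlen]

lemma hpos2 (m : ℤ) : (0:ℝ) < 2 ^ m := zpow_pos (by norm_num) m

lemma dyadicUnif_self (k m : ℤ) :
    dyadicUnif k m (Set.Ioo ((k : ℝ) * 2 ^ m) (((k : ℝ) + 1) * 2 ^ m)) = 1 := by
  rw [dyadicUnif_apply _ _ _ measurableSet_Ioo, Set.inter_self, Real.volume_Ioo]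
  have hlen : ((k:ℝ)+1) * 2 ^ m - (k:ℝ) * 2 ^ m = 2 ^ m := by ring
  rw [hlen, ENNReal.inv_mul_cancel (ENNReal.ofReal_pos.mpr (hpos2 m)).ne'
    ENNReal.ofReal_ne_top]

/-- There is an absolutely continuous probability measure on ℝ — the uniform
distribution on the complement in [0,1] of a dense open set A of Lebesgue measure
strictly between 0 and 1 — that is not a countable mixture of uniform distributions
on dyadic intervals. -/
theorem exists_ac_probability_not_dyadic_mixture :
    ∃ (A : Set ℝ) (μ : Measure ℝ),
      IsOpen A ∧ A ⊆ Set.Ioo 0 1 ∧ Set.Ioo (0:ℝ) 1 ⊆ closure A ∧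
      0 < volume A ∧ volume A < 1 ∧
      μ = (volume (Set.Icc (0:ℝ) 1 \ A))⁻¹ • volume.restrict (Set.Icc (0:ℝ) 1 \ A) ∧
      IsProbabilityMeasure μ ∧ μ ≪ volume ∧ ¬ InMixDyadic μ := by
  -- a dense sequence in (0,1)
  obtain ⟨u, hu01, hudense⟩ :
      ∃ u : ℕ → ℝ, (∀ n, u n ∈ Ioo (0:ℝ) 1) ∧ Ioo (0:ℝ) 1 ⊆ closure (range u) := by
    have hne : Nonempty (Ioo (0:ℝ) 1) := ⟨⟨1/2, by norm_num⟩⟩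
    refine ⟨fun n => (TopologicalSpace.denseSeq (Ioo (0:ℝ) 1) n : ℝ), fun n => (TopologicalSpace.denseSeq (Ioo (0:ℝ) 1) n).2, ?_⟩
    intro x hx
    have h1 : (⟨x, hx⟩ : Ioo (0:ℝ) 1) ∈ closure (range (TopologicalSpace.denseSeq (Ioo (0:ℝ) 1))) :=
      TopologicalSpace.denseRange_denseSeq (Ioo (0:ℝ) 1) _
    rw [closure_subtype] at h1
    convert h1 using 2
    rw [← range_comp]; rfl
  set r : ℕ → ℝ := fun n => (2:ℝ)⁻¹ ^ (n + 3) with hr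
  have hrpos : ∀ n, 0 < r n := fun n => by positivity
  set A : Set ℝ := ⋃ n, Ioo (u n - r n) (u n + r n) ∩ Ioo 0 1 with hA
  have hAopen : IsOpen A := isOpen_iUnion fun n => isOpen_Ioo.inter isOpen_Ioo
  have hAsub : A ⊆ Ioo (0:ℝ) 1 := iUnion_subset fun n => inter_subset_right
  have huA : ∀ n, u n ∈ A := fun n =>
    mem_iUnion.mpr ⟨n, ⟨⟨by linarith [hrpos n], by linarith [hrpos n]⟩, hu01 n⟩⟩
  have hAdense : Ioo (0:ℝ) 1 ⊆ closure A :=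
    fun x hx => closure_mono (range_subset_iff.mpr huA) (hudense hx)
  have hApos : 0 < volume A := by
    refine lt_of_lt_of_le ?_ (measure_mono (subset_iUnion_of_subset 0 subset_rfl))
    exact (isOpen_Ioo.inter isOpen_Ioo).measure_pos volume
      ⟨u 0, ⟨⟨by linarith [hrpos 0], by linarith [hrpos 0]⟩, hu01 0⟩⟩
  have hAle : volume A ≤ 2⁻¹ := by
    refine (measure_iUnion_le _).trans ?_
    have hterm : ∀ n : ℕ, volume (Ioo (u n - r n) (u n + r n) ∩ Ioo (0:ℝ) 1)
        ≤ (2:ℝ≥0∞)⁻¹ ^ (n + 2) := by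
      intro n
      refine (measure_mono inter_subset_left).trans ?_
      rw [Real.volume_Ioo]
      have : u n + r n - (u n - r n) = 2 * r n := by ring
      rw [this]
      have h2 : 2 * r n = (2:ℝ)⁻¹ ^ (n + 2) := by
        rw [hr]; ring
      rw [h2]
      have heq : ENNReal.ofReal ((2:ℝ)⁻¹ ^ (n + 2)) = (2:ℝ≥0∞)⁻¹ ^ (n + 2) := by
        rw [ENNReal.ofReal_pow (by norm_num), ENNReal.ofReal_inv_of_pos (by norm_num),
          ENNReal.ofReal_ofNat]
      exact heq.le
    refine (ENNReal.tsum_le_tsum hterm).trans ?_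
    have : ∑' n : ℕ, (2:ℝ≥0∞)⁻¹ ^ (n + 2) = (2:ℝ≥0∞)⁻¹ ^ 2 * ∑' n : ℕ, (2:ℝ≥0∞)⁻¹ ^ n := by
      rw [← ENNReal.tsum_mul_left]
      congr 1; ext n; rw [← pow_add]; ring_nf
    rw [this, ENNReal.tsum_geometric]
    rw [ENNReal.one_sub_inv_two]
    rw [inv_inv]
    rw [pow_two]
    rw [mul_assoc, ENNReal.inv_mul_cancel (by norm_num) (by norm_num)]
    rw [mul_one]
  have hAlt1 : volume A < 1 := lt_of_le_of_lt hAle (ENNReal.inv_lt_one.mpr (by norm_num))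
  -- the complement set and its measure
  set K : Set ℝ := Icc (0:ℝ) 1 \ A with hK
  set c : ℝ≥0∞ := volume K with hc
  have hAne_top : volume A ≠ ⊤ := hAlt1.ne_top
  have hcne0 : c ≠ 0 := by
    intro h0
    have h1 : volume (Icc (0:ℝ) 1) ≤ volume K + volume A := by
      refine (measure_mono ?_).trans (measure_union_le _ _)
      intro x hx
      by_cases hxA : x ∈ A
      · exact Or.inr hxA
      · exact Or.inl ⟨hx, hxA⟩
    rw [Real.volume_Icc, ← hc, h0, zero_add] at h1
    simp at h1
    exact absurd (lt_of_le_of_lt h1 hAlt1) (lt_irrefl _)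
  have hcne_top : c ≠ ⊤ := by
    refine ne_top_of_le_ne_top ?_ (measure_mono diff_subset)
    rw [Real.volume_Icc]; norm_num
  have hKmeas : MeasurableSet K := measurableSet_Icc.diff hAopen.measurableSet
  set μ : Measure ℝ := c⁻¹ • volume.restrict K with hμ
  have hprob : IsProbabilityMeasure μ := by
    constructor
    rw [hμ, Measure.smul_apply, Measure.restrict_apply_univ, smul_eq_mul,
      ENNReal.inv_mul_cancel hcne0 hcne_top]
  have hac : μ ≪ volume := by
    exact (Measure.absolutelyContinuous_of_le Measure.restrict_le_self).smul_left _
  refine ⟨A, μ, hAopen, hAsub, hAdense, hApos, hAlt1, rfl, hprob, hac, ?_⟩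
  -- the non-mixture part
  rintro ⟨p, hp1, hpμ⟩
  obtain ⟨km, hpkm⟩ : ∃ km, p km ≠ 0 := by
    by_contra h
    push_neg at h
    rw [ENNReal.tsum_eq_zero.mpr h] at hp1
    · exact zero_ne_one hp1
  obtain ⟨k, m⟩ := km
  set a : ℝ := (k:ℝ) * 2 ^ m with ha
  set b : ℝ := ((k:ℝ) + 1) * 2 ^ m with hb
  -- μ (Ioo a b) > 0
  have hμJ : 0 < μ (Ioo a b) := by
    rw [hpμ, Measure.sum_apply _ measurableSet_Ioo]
    refine lt_of_lt_of_le ?_ (ENNReal.le_tsum (k, m))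
    rw [Measure.smul_apply, smul_eq_mul, dyadicUnif_self, mul_one]
    exact pos_iff_ne_zero.mpr hpkm
  -- hence (Ioo a b) ∩ Ioo 0 1 has positive measure, in particular nonempty
  have hJK : 0 < volume (Ioo a b ∩ K) := by
    rw [hμ, Measure.smul_apply, Measure.restrict_apply measurableSet_Ioo, smul_eq_mul] at hμJ
    exact pos_iff_ne_zero.mpr fun h => by simp [h] at hμJ
  have hJ01 : (Ioo a b ∩ Ioo (0:ℝ) 1).Nonempty := by
    have hsub : Ioo a b ∩ K ⊆ (Ioo a b ∩ Ioo (0:ℝ) 1) ∪ {0, 1} := by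
      rintro x ⟨hxJ, hxI, -⟩
      rcases eq_or_lt_of_le hxI.1 with h0 | h0
      · exact Or.inr (Or.inl h0.symm)
      rcases eq_or_lt_of_le hxI.2 with h1 | h1
      · exact Or.inr (Or.inr h1)
      exact Or.inl ⟨hxJ, h0, h1⟩
    have hle : volume (Ioo a b ∩ K) ≤ volume (Ioo a b ∩ Ioo (0:ℝ) 1) + volume ({0, 1} : Set ℝ) :=
      (measure_mono hsub).trans (measure_union_le _ _)
    have hpts : volume ({0, 1} : Set ℝ) = 0 :=
      ((Set.finite_singleton (1:ℝ)).insert 0).measure_zero _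
    rw [hpts, add_zero] at hle
    have this := hle
    have hpos := lt_of_lt_of_le hJK this
    exact nonempty_of_measure_ne_zero hpos.ne'
  -- A meets Ioo a b
  obtain ⟨x, hxJ, hx01⟩ := hJ01
  have hxcl : x ∈ closure A := hAdense hx01
  obtain ⟨y, hyO, hyA⟩ :=
    mem_closure_iff.mp hxcl (Ioo a b ∩ Ioo 0 1) (isOpen_Ioo.inter isOpen_Ioo) ⟨hxJ, hx01⟩
  have hAJpos : 0 < volume (A ∩ Ioo a b) := by
    refine (hAopen.inter isOpen_Ioo).measure_pos volume ⟨y, hyA, hyO.1⟩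
  -- but μ A = 0 while the mixture gives A positive mass
  have hμA : μ A = 0 := by
    rw [hμ, Measure.smul_apply, Measure.restrict_apply hAopen.measurableSet, smul_eq_mul]
    have : A ∩ K = ∅ := by
      ext z; simp only [mem_inter_iff, hK, mem_diff, mem_empty_iff_false, iff_false]
      rintro ⟨hz, -, hz'⟩; exact hz' hz
    rw [this, measure_empty, mul_zero]
  have hmixA : 0 < μ A := by
    rw [hpμ, Measure.sum_apply _ hAopen.measurableSet]
    refine lt_of_lt_of_le ?_ (ENNReal.le_tsum (k, m))
    rw [Measure.smul_apply, smul_eq_mul, dyadicUnif_apply _ _ _ hAopen.measurableSet]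
    refine ENNReal.mul_pos hpkm ?_ |>.trans_le le_rfl
    refine (ENNReal.mul_pos ?_ hAJpos.ne').ne'
    exact ENNReal.inv_ne_zero.mpr ENNReal.ofReal_ne_top
  rw [hμA] at hmixA
  exact lt_irrefl _ hmixA
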